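/- Let R be a Noetherian ring of prime characteristic p. Then the NE closure of the zero ideal, 0^★, equals the intersection of the absolutely minimal prime ideals of R (assuming Spec R is connected). -/

import Mathlib

/-- The `q`-th Frobenius power of an ideal: the ideal generated by `q`-th powers of elements. -/
def Ideal.frobPow {R : Type*} [CommRing R] (I : Ideal R) (q : ℕ) : Ideal R :=
  Ideal.span ((fun a => a ^ q) '' (I : Set R))

/-- `R°`: the complement of the union of the minimal primes of `R`. -/
def tightMultipliers (R : Type*) [CommRing R] : Set R :=
  {c | ∀ P ∈ minimalPrimes R, c ∉ P}

/-- The tight closure of an ideal `I` in a ring of characteristic `p`. -/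
def tightClosure {R : Type*} [CommRing R] (p : ℕ) (I : Ideal R) : Set R :=
  {x | ∃ c ∈ tightMultipliers R, ∃ q₀ : ℕ, ∀ e : ℕ, q₀ ≤ p ^ e →
    c * x ^ p ^ e ∈ I.frobPow (p ^ e)}

/-- A minimal prime `P` is absolutely minimal if `dim R/P = dim R`. -/
def IsAbsolutelyMinimal {R : Type*} [CommRing R] (P : Ideal R) : Prop :=
  P ∈ minimalPrimes R ∧ ringKrullDim (R ⧸ P) = ringKrullDim R

/-- `R^•`: the complement of the union of the absolutely minimal primes of `R`. -/
def neMultipliers (R : Type*) [CommRing R] : Set R :=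
  {c | ∀ P : Ideal R, IsAbsolutelyMinimal P → c ∉ P}

/-- The NE closure of an ideal `I` in a ring of characteristic `p`. -/
def neClosure {R : Type*} [CommRing R] (p : ℕ) (I : Ideal R) : Set R :=
  {x | ∃ c ∈ neMultipliers R, ∃ q₀ : ℕ, ∀ e : ℕ, q₀ ≤ p ^ e →
    c * x ^ p ^ e ∈ I.frobPow (p ^ e)}

/-- A system of parameters for a Noetherian local ring: `dim R` elements generating an
ideal primary to the maximal ideal. -/
def IsSOP {R : Type*} [CommRing R] [IsLocalRing R] {n : ℕ} (x : Fin n → R) : Prop :=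
  ringKrullDim R = n ∧
    (Ideal.span (Set.range x)).radical = IsLocalRing.maximalIdeal R

/-- A Noetherian local ring is Cohen–Macaulay iff some system of parameters is a
regular sequence. -/
def IsCohenMacaulayLocal (R : Type*) [CommRing R] [IsLocalRing R] : Prop :=
  ∃ (n : ℕ) (x : Fin n → R), IsSOP x ∧ RingTheory.Sequence.IsRegular R (List.ofFn x)

/-- The Frobenius power of the zero ideal is zero (for positive exponent). -/
lemma frobPow_bot' {R : Type*} [CommRing R] {q : ℕ} (hq : q ≠ 0) :
    (⊥ : Ideal R).frobPow q = ⊥ := by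
  simp [Ideal.frobPow, Set.image_singleton, zero_pow hq]

theorem stmt_4 {R : Type*} [CommRing R] [IsNoetherianRing R]
    [ConnectedSpace (PrimeSpectrum R)] (p : ℕ) (hp : p.Prime) [CharP R p] :
    neClosure p (⊥ : Ideal R) =
      ↑(sInf {P : Ideal R | IsAbsolutelyMinimal P}) := by
  haveI : Nontrivial R := CharP.nontrivial_of_char_ne_one hp.ne_one
  have hpe : ∀ e : ℕ, p ^ e ≠ 0 := fun e => pow_ne_zero e hp.ne_zero
  ext x
  simp only [SetLike.mem_coe, Ideal.mem_sInf, Set.mem_setOf_eq]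
  constructor
  · rintro ⟨c, hc, q₀, hq⟩ P hP
    haveI hPP : P.IsPrime := hP.1.1.1
    have hle : q₀ ≤ p ^ q₀ := (Nat.lt_pow_self hp.one_lt : q₀ < p ^ q₀).le
    have h0 := hq q₀ hle
    rw [frobPow_bot' (hpe q₀), Ideal.mem_bot] at h0
    have hmem : c * x ^ p ^ q₀ ∈ P := by rw [h0]; exact P.zero_mem
    have hxq : x ^ p ^ q₀ ∈ P := (hPP.mem_or_mem hmem).resolve_left (hc P hP)
    exact hPP.mem_of_pow_mem _ hxq
  · intro hx
    have hfin : (minimalPrimes R).Finite := minimalPrimes.finite_of_isNoetherianRing R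
    set S : Set (Ideal R) := {P | IsAbsolutelyMinimal P} with hS
    have hSsub : S ⊆ minimalPrimes R := fun P hP => hP.1
    have hSfin : S.Finite := hfin.subset hSsub
    have hTfin : (minimalPrimes R \ S).Finite := hfin.diff
    classical
    -- find c in every non-absolutely-minimal minimal prime, outside every abs. min. prime
    have hnsub : ¬ ((hTfin.toFinset.inf id : Ideal R) : Set R) ⊆
        ⋃ P ∈ (hSfin.toFinset : Set (Ideal R)), ↑(id P : Ideal R) := by
      rw [Ideal.subset_union_prime ⊥ ⊥ (fun P hPs _ _ => by
        have : P ∈ S := hSfin.mem_toFinset.mp hPs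
        exact this.1.1.1)]
      rintro ⟨P, hPs, hle⟩
      have hPS : P ∈ S := hSfin.mem_toFinset.mp hPs
      haveI : P.IsPrime := hPS.1.1.1
      simp only [id_eq] at hle
      rw [Ideal.IsPrime.inf_le' ‹P.IsPrime›] at hle
      obtain ⟨Q, hQt, hQle⟩ := hle
      have hQ : Q ∈ minimalPrimes R \ S := hTfin.mem_toFinset.mp hQt
      have : P ≤ Q := hPS.1.2 ⟨hQ.1.1.1, bot_le⟩ hQle
      have heq : Q = P := le_antisymm hQle this
      rw [heq] at hQ
      exact hQ.2 hPS
    obtain ⟨c, hcJ, hcU⟩ := Set.not_subset.mp hnsub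
    rw [SetLike.mem_coe] at hcJ
    simp only [Set.mem_iUnion, SetLike.mem_coe, id_eq, not_exists] at hcU
    have hcS : ∀ P : Ideal R, IsAbsolutelyMinimal P → c ∉ P := by
      intro P hP
      exact fun h => hcU P (hSfin.mem_toFinset.mpr hP) h
    -- c * x is nilpotent
    have hnil : IsNilpotent (c * x) := by
      rw [← mem_nilradical, nilradical_eq_sInf, Ideal.mem_sInf]
      intro J hJ
      haveI : J.IsPrime := hJ
      obtain ⟨Q, hQ, hQle⟩ := Ideal.exists_minimalPrimes_le (I := (⊥ : Ideal R)) (J := J) bot_le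
      haveI : Q.IsPrime := hQ.1.1
      by_cases hQS : Q ∈ S
      · exact hQle (Q.mul_mem_left c (hx hQS))
      · have hle' : hTfin.toFinset.inf id ≤ Q :=
          (Finset.inf_le (hTfin.mem_toFinset.mpr ⟨hQ, hQS⟩)).trans (le_of_eq rfl)
        have hcQ : c ∈ Q := hle' hcJ
        exact hQle (Q.mul_mem_right x hcQ)
    obtain ⟨n, hn⟩ := hnil
    set m := n + 1 with hm
    have hm0 : (c * x) ^ m = 0 := by rw [hm, pow_succ, hn, zero_mul]
    refine ⟨c ^ m, ?_, m, ?_⟩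
    · intro P hP hcm
      haveI : P.IsPrime := hP.1.1.1
      exact hcS P hP (‹P.IsPrime›.mem_of_pow_mem _ hcm)
    · intro e he
      have hxe : x ^ p ^ e = x ^ m * x ^ (p ^ e - m) := by
        rw [← pow_add, Nat.add_sub_cancel' he]
      have : c ^ m * x ^ p ^ e = 0 := by
        rw [hxe, ← mul_assoc, ← mul_pow, hm0, zero_mul]
      rw [this]
      exact Submodule.zero_mem _
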